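/- For the rational map R₂(z) = 2/(z² + 2z) on the Riemann sphere, the critical points are −1 and ∞, and the critical orbits satisfy R₂(−1) = −2, R₂(−2) = ∞, R₂(∞) = 0 and R₂(0) = ∞. Consequently the postcritical set of R₂ is exactly {−2, ∞, 0}. -/

import Mathlib

open OnePoint

/-- The capture map `R₂(z) = 2/(z² + 2z)` as a self-map of the Riemann sphere. -/
noncomputable def R2 : OnePoint ℂ → OnePoint ℂ := fun z =>
  match (z : Option ℂ) with
  | Option.none => ((0 : ℂ) : OnePoint ℂ)
  | Option.some w => if w ^ 2 + 2 * w = 0 then ∞ else (((2 / (w ^ 2 + 2 * w)) : ℂ) : OnePoint ℂ)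

/-- A point is critical for `f` if `f` fails to be locally injective there. -/
def IsCriticalPt (f : OnePoint ℂ → OnePoint ℂ) (c : OnePoint ℂ) : Prop :=
  ¬ ∃ U ∈ nhds c, Set.InjOn f U

open Filter Set

lemma R2_coe (w : ℂ) : R2 (w : OnePoint ℂ) =
    if w ^ 2 + 2 * w = 0 then ∞ else (((2 / (w ^ 2 + 2 * w)) : ℂ) : OnePoint ℂ) := rfl

lemma R2_infty : R2 ∞ = ((0 : ℂ) : OnePoint ℂ) := rfl

lemma R2_neg1 : R2 ((-1 : ℂ) : OnePoint ℂ) = ((-2 : ℂ) : OnePoint ℂ) := by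
  rw [R2_coe]; norm_num

lemma R2_neg2 : R2 ((-2 : ℂ) : OnePoint ℂ) = ∞ := by rw [R2_coe]; norm_num

lemma R2_zero : R2 ((0 : ℂ) : OnePoint ℂ) = ∞ := by rw [R2_coe]; norm_num

lemma crit_neg1 : IsCriticalPt R2 ((-1 : ℂ) : OnePoint ℂ) := by
  rintro ⟨U, hU, hinj⟩
  rw [OnePoint.nhds_coe_eq, Filter.mem_map] at hU
  obtain ⟨ε, hε, hball⟩ := Metric.mem_nhds_iff.1 hU
  set t : ℝ := min ε 1 / 2 with ht
  have ht0 : 0 < t := by positivity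
  have htε : t < ε := by
    have := min_le_left ε 1; simp only [ht]; linarith
  have ht1 : t ≤ 1 / 2 := by
    have := min_le_right ε 1; simp only [ht]; linarith
  set p : ℂ := -1 + (t : ℂ) with hp
  set q : ℂ := -1 - (t : ℂ) with hq
  have hpU : (p : OnePoint ℂ) ∈ U := by
    apply hball
    simp [hp, Metric.mem_ball, dist_eq_norm]
    rw [abs_of_pos ht0]; exact htε
  have hqU : (q : OnePoint ℂ) ∈ U := by
    apply hball
    simp [hq, Metric.mem_ball, dist_eq_norm]
    rw [abs_of_pos ht0]; exact htε
  have hden : (t : ℂ) ^ 2 - 1 ≠ 0 := by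
    intro h
    have h' : (t : ℝ) ^ 2 = 1 := by
      have : ((t : ℂ)) ^ 2 = 1 := by linear_combination h
      exact_mod_cast this
    nlinarith
  have hRp : R2 (p : OnePoint ℂ) = (((2 / ((t:ℂ)^2 - 1)) : ℂ) : OnePoint ℂ) := by
    rw [R2_coe, show p ^ 2 + 2 * p = (t:ℂ)^2 - 1 by rw [hp]; ring, if_neg hden]
  have hRq : R2 (q : OnePoint ℂ) = (((2 / ((t:ℂ)^2 - 1)) : ℂ) : OnePoint ℂ) := by
    rw [R2_coe, show q ^ 2 + 2 * q = (t:ℂ)^2 - 1 by rw [hq]; ring, if_neg hden]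
  have := hinj hpU hqU (hRp.trans hRq.symm)
  rw [OnePoint.coe_eq_coe] at this
  have : (t : ℂ) = 0 := by rw [hp, hq] at this; linear_combination this / 2
  have : t = 0 := by exact_mod_cast this
  linarith

lemma tendsto_op_infty {f : ℕ → ℂ} (h : Tendsto (fun n => ‖f n‖) atTop atTop) :
    Tendsto (fun n => ((f n : ℂ) : OnePoint ℂ)) atTop (nhds ∞) := by
  have h1 : Tendsto f atTop (Bornology.cobounded ℂ) := tendsto_norm_atTop_iff_cobounded.1 h
  have h2 := OnePoint.tendsto_coe_infty (X := ℂ)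
  rw [Filter.coclosedCompact_eq_cocompact, ← Metric.cobounded_eq_cocompact] at h2
  exact h2.comp h1

lemma crit_infty : IsCriticalPt R2 (∞ : OnePoint ℂ) := by
  rintro ⟨U, hU, hinj⟩
  have h1 : Tendsto (fun n : ℕ => (((n : ℂ)) : OnePoint ℂ)) atTop (nhds ∞) := by
    apply tendsto_op_infty
    simpa using tendsto_natCast_atTop_atTop (R := ℝ)
  have h2 : Tendsto (fun n : ℕ => (((-2 - (n : ℂ) : ℂ)) : OnePoint ℂ)) atTop (nhds ∞) := by
    apply tendsto_op_infty
    apply tendsto_atTop_mono (f := fun n : ℕ => (n : ℝ) - 2)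
    · intro n
      have h := norm_sub_le (-2 - (n:ℂ)) (-2)
      rw [show (-2 - (n:ℂ)) - (-2) = -(n:ℂ) by ring, norm_neg] at h
      have hn : ‖((n:ℕ):ℂ)‖ = (n:ℝ) := by simp
      have h2 : ‖(-2:ℂ)‖ = 2 := by norm_num
      rw [hn, h2] at h
      linarith
    · apply tendsto_atTop_add_const_right
      exact tendsto_natCast_atTop_atTop
  have e1 : ∀ᶠ n : ℕ in atTop, (((n : ℂ)) : OnePoint ℂ) ∈ U := Filter.mem_map.1 (h1 hU)
  have e2 : ∀ᶠ n : ℕ in atTop, (((-2 - (n : ℂ) : ℂ)) : OnePoint ℂ) ∈ U := Filter.mem_map.1 (h2 hU)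
  obtain ⟨n, ⟨hn1, hn2⟩, hn3⟩ := ((e1.and e2).and (eventually_ge_atTop 1)).exists
  have hd : (n : ℂ) ^ 2 + 2 * (n : ℂ) ≠ 0 := by
    intro h
    have : ((n^2 + 2*n : ℕ) : ℂ) = 0 := by push_cast; linear_combination h
    have : n ^ 2 + 2 * n = 0 := by exact_mod_cast this
    omega
  have hd' : (-2 - (n:ℂ)) ^ 2 + 2 * (-2 - (n:ℂ)) = (n : ℂ) ^ 2 + 2 * (n : ℂ) := by ring
  have hval : R2 (((n : ℂ)) : OnePoint ℂ) = R2 (((-2 - (n : ℂ) : ℂ)) : OnePoint ℂ) := by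
    rw [R2_coe, R2_coe, hd', if_neg hd]
  have := hinj hn1 hn2 hval
  rw [OnePoint.coe_eq_coe] at this
  have h2n : ((2 * n : ℕ) : ℂ) = -2 := by push_cast; linear_combination this
  have : ((2 * n : ℕ) : ℝ) = -2 := by exact_mod_cast h2n
  have := Nat.cast_nonneg (α := ℝ) (2 * n)
  linarith

lemma noncrit (c : ℂ) (hc : c ≠ -1) : ¬ IsCriticalPt R2 ((c : ℂ) : OnePoint ℂ) := by
  rw [IsCriticalPt, not_not]
  set r : ℝ := dist c (-1) with hr
  have hr0 : 0 < r := dist_pos.2 hc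
  refine ⟨(fun x : ℂ => (x : OnePoint ℂ)) '' Metric.ball c r, ?_, ?_⟩
  · rw [OnePoint.nhds_coe_eq]
    exact Filter.image_mem_map (Metric.ball_mem_nhds c hr0)
  · rintro a ⟨w, hw, rfl⟩ b ⟨u, hu, rfl⟩ hab
    rw [OnePoint.coe_eq_coe]
    rw [Metric.mem_ball, dist_eq_norm] at hw hu
    have hmid : w + u ≠ -2 := by
      intro h
      have : dist c (-1) ≤ (‖w - c‖ + ‖u - c‖) / 2 := by
        rw [dist_eq_norm, show c - (-1) = -(((w - c) + (u - c)) / 2) by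
          rw [show (-1 : ℂ) = (w + u) / 2 by rw [h]; ring]; ring, norm_neg]
        calc ‖((w - c) + (u - c)) / 2‖ ≤ (‖w - c‖ + ‖u - c‖) / 2 := by
              rw [norm_div]
              simp only [Complex.norm_ofNat]
              gcongr
              exact norm_add_le _ _
          _ = _ := rfl
      rw [← hr] at this
      linarith
    rw [R2_coe, R2_coe] at hab
    by_cases hdw : w ^ 2 + 2 * w = 0 <;> by_cases hdu : u ^ 2 + 2 * u = 0
    · have hw' : w = 0 ∨ w = -2 := by
        rcases mul_eq_zero.1 (show w * (w + 2) = 0 by linear_combination hdw) with h | h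
        · exact Or.inl h
        · exact Or.inr (by linear_combination h)
      have hu' : u = 0 ∨ u = -2 := by
        rcases mul_eq_zero.1 (show u * (u + 2) = 0 by linear_combination hdu) with h | h
        · exact Or.inl h
        · exact Or.inr (by linear_combination h)
      rcases hw' with rfl | rfl <;> rcases hu' with rfl | rfl <;>
        first | rfl | (exfalso; apply hmid; ring)
    · rw [if_pos hdw, if_neg hdu] at hab
      exact absurd hab.symm (OnePoint.coe_ne_infty _)
    · rw [if_neg hdw, if_pos hdu] at hab
      exact absurd hab (OnePoint.coe_ne_infty _)
    · rw [if_neg hdw, if_neg hdu, OnePoint.coe_eq_coe] at hab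
      have heq : w ^ 2 + 2 * w = u ^ 2 + 2 * u := by
        field_simp at hab
        rw [one_div, one_div, inv_inj] at hab
        linear_combination hab
      rcases mul_eq_zero.1 (show (w - u) * (w + u + 2) = 0 by linear_combination heq) with h | h
      · linear_combination h
      · exact absurd (by linear_combination h) hmid

lemma crit_set : {c | IsCriticalPt R2 c} = {((-1 : ℂ) : OnePoint ℂ), ∞} := by
  ext c
  simp only [Set.mem_setOf_eq, Set.mem_insert_iff, Set.mem_singleton_iff]
  induction c using OnePoint.rec with
  | infty => simp [crit_infty]
  | coe w =>
    constructor
    · intro h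
      by_contra hne
      push_neg at hne
      have hw : w ≠ -1 := fun h' => hne.1 (by rw [h'])
      exact noncrit w hw h
    · rintro (h | h)
      · rw [OnePoint.coe_eq_coe] at h; rw [h]; exact crit_neg1
      · exact absurd h (OnePoint.coe_ne_infty w)

lemma orbit_S : ∀ k : ℕ, ∀ x ∈ ({∞, ((0:ℂ) : OnePoint ℂ)} : Set (OnePoint ℂ)),
    R2^[k] x ∈ ({∞, ((0:ℂ) : OnePoint ℂ)} : Set (OnePoint ℂ)) := by
  intro k
  induction k with
  | zero => intro x hx; simpa using hx
  | succ n ih =>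
    intro x hx
    rw [Function.iterate_succ_apply']
    rcases ih x hx with h | h <;> rw [h]
    · rw [R2_infty]; exact Or.inr rfl
    · rw [R2_zero]; exact Or.inl rfl

lemma postcrit : {p | ∃ c, IsCriticalPt R2 c ∧ ∃ k, 1 ≤ k ∧ R2^[k] c = p} =
    {((-2 : ℂ) : OnePoint ℂ), ∞, ((0 : ℂ) : OnePoint ℂ)} := by
  have hcrit : ∀ c, IsCriticalPt R2 c ↔ c = ((-1 : ℂ) : OnePoint ℂ) ∨ c = ∞ := by
    intro c
    rw [show IsCriticalPt R2 c ↔ c ∈ {c | IsCriticalPt R2 c} from Iff.rfl, crit_set]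
    simp
  ext p
  simp only [Set.mem_setOf_eq, Set.mem_insert_iff, Set.mem_singleton_iff]
  constructor
  · rintro ⟨c, hc, k, hk, rfl⟩
    rcases (hcrit c).1 hc with rfl | rfl
    · obtain ⟨k', rfl⟩ := Nat.exists_eq_add_of_le hk
      rw [add_comm, Function.iterate_succ_apply, R2_neg1]
      cases k' with
      | zero => exact Or.inl rfl
      | succ k'' =>
        rw [Function.iterate_succ_apply, R2_neg2]
        rcases orbit_S k'' ∞ (Or.inl rfl) with h | h
        · exact Or.inr (Or.inl h)
        · exact Or.inr (Or.inr h)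
    · rcases orbit_S k ∞ (Or.inl rfl) with h | h
      · exact Or.inr (Or.inl h)
      · exact Or.inr (Or.inr h)
  · rintro (rfl | rfl | rfl)
    · exact ⟨((-1 : ℂ) : OnePoint ℂ), (hcrit _).2 (Or.inl rfl), 1, le_refl 1, by
        simp [R2_neg1]⟩
    · exact ⟨((-1 : ℂ) : OnePoint ℂ), (hcrit _).2 (Or.inl rfl), 2, by norm_num, by
        rw [show (2:ℕ) = 1 + 1 from rfl, Function.iterate_add_apply]
        simp [R2_neg1, R2_neg2]⟩
    · exact ⟨∞, (hcrit _).2 (Or.inr rfl), 1, le_refl 1, by simp [R2_infty]⟩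

theorem stmt_6 :
    {c | IsCriticalPt R2 c} = {((-1 : ℂ) : OnePoint ℂ), ∞} ∧
    R2 ((-1 : ℂ) : OnePoint ℂ) = ((-2 : ℂ) : OnePoint ℂ) ∧
    R2 ((-2 : ℂ) : OnePoint ℂ) = ∞ ∧
    R2 ∞ = ((0 : ℂ) : OnePoint ℂ) ∧
    R2 ((0 : ℂ) : OnePoint ℂ) = ∞ ∧
    {p | ∃ c, IsCriticalPt R2 c ∧ ∃ k, 1 ≤ k ∧ R2^[k] c = p} =
      {((-2 : ℂ) : OnePoint ℂ), ∞, ((0 : ℂ) : OnePoint ℂ)} := by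
  exact ⟨crit_set, R2_neg1, R2_neg2, R2_infty, R2_zero, postcrit⟩
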